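/- There exists a constant λ₀ > 0 such that for all real λ ≥ λ₀ and all natural numbers l with l ≥ λ − √λ, one has D_λ(l) ≥ l!·e^λ/(e⁷·λ^l). -/

import Mathlib

open Real Finset



lemma factorial_upper (n : ℕ) (hn : 1 ≤ n) :
    (n.factorial : ℝ) ≤ Real.exp 1 * Real.sqrt n * ((n : ℝ) / Real.exp 1) ^ n := by
  obtain ⟨k, rfl⟩ := Nat.exists_eq_add_of_le hn
  have h1 : Stirling.stirlingSeq (1 + k) ≤ Stirling.stirlingSeq 1 := by
    have := Stirling.log_stirlingSeq'_antitone (Nat.zero_le k)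
    simp only [Function.comp] at this
    rw [Real.log_le_log_iff (Stirling.stirlingSeq'_pos k) (Stirling.stirlingSeq'_pos 0)] at this
    simpa [Nat.add_comm] using this
  rw [Stirling.stirlingSeq_one, Stirling.stirlingSeq] at h1
  have hN : (0:ℝ) < ((1 + k : ℕ) : ℝ) := by positivity
  have hpos : (0:ℝ) < Real.sqrt (2 * ((1 + k : ℕ) : ℝ)) * (((1+k:ℕ):ℝ) / Real.exp 1) ^ (1 + k) := by
    positivity
  rw [div_le_div_iff₀ hpos (by positivity)] at h1
  have hsq : Real.sqrt (2 * ((1 + k : ℕ) : ℝ)) = Real.sqrt 2 * Real.sqrt ((1+k:ℕ)) :=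
    Real.sqrt_mul (by norm_num) _
  rw [hsq] at h1
  have h2 : (0:ℝ) < Real.sqrt 2 := by positivity
  nlinarith [h1, mul_pos h2 (mul_pos (Real.sqrt_pos.2 hN) (pow_pos (div_pos hN (Real.exp_pos 1)) (1+k)))]

lemma aux_mono (lam : ℝ) (hlam : 0 < lam) (n : ℕ) :
    ∀ j, n ≤ j → (j:ℝ) ≤ lam → (lam ^ n * j.factorial : ℝ) ≤ lam ^ j * n.factorial := by
  intro j hj
  induction j, hj using Nat.le_induction with
  | base => intro _; exact le_refl _
  | succ j hj ih =>
    intro hj1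
    have hj1' : ((j:ℝ)+1) ≤ lam := by push_cast at hj1; linarith
    have hjlam : (j:ℝ) ≤ lam := by linarith
    have hih := ih hjlam
    have hfn : (0:ℝ) < n.factorial := by exact_mod_cast Nat.factorial_pos n
    have hpj : (0:ℝ) < lam ^ j := pow_pos hlam j
    have hstep : (lam ^ n * (j+1).factorial : ℝ) = ((j:ℝ)+1) * (lam ^ n * j.factorial) := by
      rw [Nat.factorial_succ]; push_cast; ring
    rw [hstep, pow_succ]
    nlinarith [hih, hj1', mul_pos hpj hfn]

lemma numeric_exp (s lam nu : ℝ) (hs2 : s^2 = lam) (hs10 : 10 ≤ s)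
    (hd : lam - nu ≤ 2*s + 2) (hd0 : 0 ≤ lam - nu) :
    lam - 6 - nu ≤ nu - nu^2/lam := by
  have hlam0 : (0:ℝ) < lam := by nlinarith
  have hq : nu^2/lam ≤ 2*nu + 6 - lam := by
    rw [div_le_iff₀ hlam0]
    nlinarith [mul_le_mul hd hd hd0 (by linarith : (0:ℝ) ≤ 2*s + 2), sq_nonneg (s - 10)]
  linarith


/-- `D lam l = ∑_{k=0}^{l} l! / ((l-k)! * lam^k)`. -/
noncomputable def D (lam : ℝ) (l : ℕ) : ℝ :=
  ∑ k ∈ Finset.range (l + 1),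
    (Nat.factorial l : ℝ) / ((Nat.factorial (l - k) : ℝ) * lam ^ k)

/-- There is a constant `λ₀ > 0` such that for all `λ ≥ λ₀` and all naturals
`l ≥ λ − √λ`, `D_λ(l) ≥ l!·e^λ/(e⁷·λ^l)`. -/
theorem D_lower_bound_tail :
    ∃ lam₀ > (0 : ℝ), ∀ lam : ℝ, lam₀ ≤ lam → ∀ l : ℕ,
      lam - Real.sqrt lam ≤ (l : ℝ) →
      D lam l ≥ (Nat.factorial l : ℝ) * Real.exp lam / (Real.exp 7 * lam ^ l) := by
  refine ⟨100, by norm_num, fun lam hlam l hl => ?_⟩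
  have hlam0 : (0:ℝ) < lam := by linarith
  set s := Real.sqrt lam with hs_def
  have hs2 : s^2 = lam := Real.sq_sqrt hlam0.le
  have hs10 : (10:ℝ) ≤ s := by
    have : Real.sqrt 100 ≤ s := Real.sqrt_le_sqrt hlam
    rwa [show (100:ℝ) = 10^2 by norm_num, Real.sqrt_sq (by norm_num : (0:ℝ) ≤ 10)] at this
  -- the partial exponential sum
  set S : ℝ := ∑ j ∈ Finset.range (l+1), lam^j / (j.factorial : ℝ) with hS_def
  -- rewrite D
  have hD : D lam l = ((l.factorial : ℝ)/lam^l) * S := by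
    rw [hS_def, D, Finset.mul_sum, ← Finset.sum_range_reflect]
    refine Finset.sum_congr rfl fun k hk => ?_
    rw [Finset.mem_range] at hk
    have hk' : k ≤ l := Nat.lt_succ_iff.mp hk
    have h1 : l + 1 - 1 - k = l - k := by omega
    rw [h1, show l - (l - k) = k from by omega]
    have h2 : lam ^ (l - k) * lam ^ k = lam ^ l := pow_sub_mul_pow lam hk'
    rw [div_mul_div_comm, div_eq_div_iff (by positivity) (by positivity), ← h2]
    ring
  -- reduce the goal to a bound on S
  have hgoal : Real.exp (lam - 7) ≤ S → D lam l ≥ (Nat.factorial l : ℝ) * Real.exp lam / (Real.exp 7 * lam ^ l) := by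
    intro hS
    rw [hD, ge_iff_le]
    have hrhs : (Nat.factorial l : ℝ) * Real.exp lam / (Real.exp 7 * lam ^ l)
        = ((l.factorial : ℝ)/lam^l) * Real.exp (lam - 7) := by
      rw [Real.exp_sub]
      field_simp
    rw [hrhs]
    exact mul_le_mul_of_nonneg_left hS (by positivity)
  refine hgoal ?_
  -- set up indices
  set m := Nat.floor s with hm_def
  set j₀ := min l (Nat.floor lam) with hj₀_def
  have hms : (m:ℝ) ≤ s := Nat.floor_le (by linarith)
  have hsm : s < (m:ℝ) + 1 := Nat.lt_floor_add_one s
  have hfl : ((Nat.floor lam : ℕ):ℝ) ≤ lam := Nat.floor_le hlam0.le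
  have hfl' : lam < ((Nat.floor lam : ℕ):ℝ) + 1 := Nat.lt_floor_add_one lam
  have hj₀l : j₀ ≤ l := min_le_left _ _
  have hj₀lam : (j₀:ℝ) ≤ lam := by
    calc (j₀:ℝ) ≤ ((Nat.floor lam : ℕ):ℝ) := by exact_mod_cast min_le_right l _
    _ ≤ lam := hfl
  have hj₀low : lam - s - 2 ≤ (j₀:ℝ) := by
    rw [hj₀_def]
    push_cast [Nat.cast_min]
    refine le_min (by linarith) (by linarith)
  have hmj₀ : m ≤ j₀ := by
    have : (m:ℝ) ≤ (j₀:ℝ) := by nlinarith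
    exact_mod_cast this
  set n := j₀ - m with hn_def
  have hn : (n:ℝ) = (j₀:ℝ) - (m:ℝ) := by
    rw [hn_def]; push_cast [Nat.cast_sub hmj₀]; ring
  have hnlow : lam - 2*s - 2 ≤ (n:ℝ) := by rw [hn]; linarith
  have hnlam : (n:ℝ) ≤ lam := by
    rw [hn]
    have : (0:ℝ) ≤ (m:ℝ) := Nat.cast_nonneg m
    linarith
  have hn1 : 1 ≤ n := by
    have h1 : (1:ℝ) ≤ (n:ℝ) := by nlinarith
    exact_mod_cast h1
  have hnpos : (0:ℝ) < (n:ℝ) := by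
    have : (1:ℝ) ≤ (n:ℝ) := by exact_mod_cast hn1
    linarith
  have hfn : (0:ℝ) < (n.factorial:ℝ) := by exact_mod_cast Nat.factorial_pos n
  -- sum lower bound by (m+1) equal terms
  have hsub : Finset.Icc n j₀ ⊆ Finset.range (l+1) := by
    intro j hj
    rw [Finset.mem_Icc] at hj
    rw [Finset.mem_range]
    omega
  have hterm : ∀ j ∈ Finset.Icc n j₀, lam^n / (n.factorial:ℝ) ≤ lam^j / (j.factorial:ℝ) := by
    intro j hj
    rw [Finset.mem_Icc] at hj
    have hjlam : (j:ℝ) ≤ lam := le_trans (by exact_mod_cast hj.2) hj₀lam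
    have := aux_mono lam hlam0 n j hj.1 hjlam
    have hfj : (0:ℝ) < (j.factorial:ℝ) := by exact_mod_cast Nat.factorial_pos j
    rw [div_le_div_iff₀ hfn hfj]
    linarith
  have hcard : (Finset.Icc n j₀).card = m + 1 := by rw [Nat.card_Icc]; omega
  have h1 : ((m:ℝ)+1) * (lam^n / (n.factorial:ℝ)) ≤ ∑ j ∈ Finset.Icc n j₀, lam^j / (j.factorial:ℝ) := by
    have := Finset.card_nsmul_le_sum (Finset.Icc n j₀) (fun j => lam^j / (j.factorial:ℝ))
      (lam^n / (n.factorial:ℝ)) hterm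
    rw [hcard, nsmul_eq_mul] at this
    push_cast at this
    linarith
  have h2 : ∑ j ∈ Finset.Icc n j₀, lam^j / (j.factorial:ℝ) ≤ S := by
    refine Finset.sum_le_sum_of_subset_of_nonneg hsub fun j _ _ => by positivity
  -- Stirling-based bound for the key term
  have hkey : Real.exp (lam - 7) ≤ ((m:ℝ)+1) * (lam^n / (n.factorial:ℝ)) := by
    have hst := factorial_upper n hn1
    have hsn : Real.sqrt n ≤ s := Real.sqrt_le_sqrt hnlam
    -- exp(1 - n/lam) ≤ lam/n
    have hx : Real.exp (1 - (n:ℝ)/lam) ≤ lam/(n:ℝ) := by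
      have hratio : (0:ℝ) < (n:ℝ)/lam := by positivity
      have h := Real.add_one_le_exp ((n:ℝ)/lam - 1)
      have h' : (n:ℝ)/lam ≤ Real.exp ((n:ℝ)/lam - 1) := by linarith
      rw [show (1 - (n:ℝ)/lam) = -((n:ℝ)/lam - 1) by ring, Real.exp_neg]
      rw [inv_le_comm₀ (Real.exp_pos _) (by positivity), inv_div]
      exact h'
    -- hence n^n * exp(n - n^2/lam) ≤ lam^n
    have hlow : (n:ℝ)^n * Real.exp ((n:ℝ) - (n:ℝ)^2/lam) ≤ lam^n := by
      have hp : ((n:ℝ) * Real.exp (1 - (n:ℝ)/lam))^n ≤ lam^n := by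
        refine pow_le_pow_left₀ (by positivity) ?_ n
        calc (n:ℝ) * Real.exp (1 - (n:ℝ)/lam) ≤ (n:ℝ) * (lam/(n:ℝ)) :=
          mul_le_mul_of_nonneg_left hx hnpos.le
        _ = lam := by field_simp
      calc (n:ℝ)^n * Real.exp ((n:ℝ) - (n:ℝ)^2/lam)
          = ((n:ℝ) * Real.exp (1 - (n:ℝ)/lam))^n := by
            rw [mul_pow, ← Real.exp_nat_mul]
            congr 1
            field_simp
        _ ≤ lam^n := hp
    -- numeric inequality on exponents
    have hδ : lam - (n:ℝ) ≤ 2*s + 2 := by linarith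
    have hδ0 : (0:ℝ) ≤ lam - (n:ℝ) := by linarith
    have hnum : lam - 6 - (n:ℝ) ≤ (n:ℝ) - (n:ℝ)^2/lam :=
      numeric_exp s lam (n:ℝ) hs2 hs10 hδ hδ0
    have hmono : Real.exp (lam - 6 - (n:ℝ)) ≤ Real.exp ((n:ℝ) - (n:ℝ)^2/lam) :=
      Real.exp_le_exp.mpr hnum
    have hexp1 : (Real.exp 1)^n = Real.exp (n:ℝ) := by
      rw [← Real.exp_nat_mul]; norm_num
    have hchain : Real.exp (lam - 7) * (n.factorial:ℝ) ≤ s * lam^n := by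
      have e1 : Real.exp (lam-7) * (Real.exp 1 * s * (((n:ℝ))/Real.exp 1)^n)
          = s * ((n:ℝ)^n * Real.exp (lam - 6 - (n:ℝ))) := by
        have hkeyexp : Real.exp (lam - 7) * Real.exp 1 = Real.exp (lam - 6 - (n:ℝ)) * Real.exp (n:ℝ) := by
          rw [← Real.exp_add, ← Real.exp_add]
          congr 1
          ring
        rw [div_pow, hexp1]
        have h0 := (Real.exp_pos (n:ℝ)).ne'
        field_simp
        linear_combination hkeyexp
      calc Real.exp (lam-7) * (n.factorial:ℝ)
          ≤ Real.exp (lam-7) * (Real.exp 1 * Real.sqrt n * (((n:ℝ))/Real.exp 1)^n) := by gcongr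
        _ ≤ Real.exp (lam-7) * (Real.exp 1 * s * (((n:ℝ))/Real.exp 1)^n) := by gcongr
        _ = s * ((n:ℝ)^n * Real.exp (lam - 6 - (n:ℝ))) := e1
        _ ≤ s * ((n:ℝ)^n * Real.exp ((n:ℝ) - (n:ℝ)^2/lam)) := by gcongr
        _ ≤ s * lam^n := by
            refine mul_le_mul_of_nonneg_left hlow (by linarith)
    have hs_pos : (0:ℝ) < s := by linarith
    calc Real.exp (lam - 7) = (Real.exp (lam-7) * (n.factorial:ℝ))/(n.factorial:ℝ) := by
          field_simp
      _ ≤ (s * lam^n)/(n.factorial:ℝ) := by gcongr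
      _ = s * (lam^n/(n.factorial:ℝ)) := by ring
      _ ≤ ((m:ℝ)+1) * (lam^n/(n.factorial:ℝ)) := by
          have hq : (0:ℝ) ≤ lam^n/(n.factorial:ℝ) := by positivity
          exact mul_le_mul_of_nonneg_right (by linarith) hq
  calc Real.exp (lam - 7) ≤ ((m:ℝ)+1) * (lam^n / (n.factorial:ℝ)) := hkey
    _ ≤ ∑ j ∈ Finset.Icc n j₀, lam^j / (j.factorial:ℝ) := h1
    _ ≤ S := h2
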